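/- arXiv:2112.07526 — 3 statements merged into one kernel-verified Lean document; each statement's English description precedes it below -/
import Mathlib

section
/- For every integer k ≥ 0 and indeterminate x, the generating function A_{k,x}(y) := Σ_{m=-1}^∞ a_{m,k}(x) y^{m+1}, where a_{m,k}(x) = Σ_{k₁=k}^{m+1} ((-1)^{k₁-k}/k₁!) [k₁ choose k] C(x, m+1-k₁), equals (1/k!)·(1+y)^x·log^k(1+y) as a formal power series in y. -/
open Finset

/-- Generalized binomial coefficient `C(x, n) = x(x-1)⋯(x-n+1)/n!` as a function of `x : ℚ`. -/
noncomputable def myChoose (x : ℚ) (n : ℕ) : ℚ :=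
  (∏ i ∈ Finset.range n, (x - (i : ℚ))) / (n.factorial : ℚ)

/-- Unsigned Stirling numbers of the first kind, `(x)_n = Σ_k stirling1 n k · x^k`. -/
def stirling1 : ℕ → ℕ → ℕ
  | 0, 0 => 1
  | 0, _ + 1 => 0
  | n + 1, 0 => n * stirling1 n 0
  | n + 1, k + 1 => n * stirling1 n (k + 1) + stirling1 n k

/-- Stirling numbers of the second kind. -/
def stirling2 : ℕ → ℕ → ℕ
  | 0, 0 => 1
  | 0, _ + 1 => 0
  | _ + 1, 0 => 0
  | n + 1, k + 1 => (k + 1) * stirling2 n (k + 1) + stirling2 n k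

/-- The formal power series `log(1+y) = Σ_{n ≥ 1} (-1)^{n-1} y^n / n`. -/
noncomputable def log1p : PowerSeries ℚ :=
  PowerSeries.mk fun n => if n = 0 then 0 else (-1 : ℚ) ^ (n + 1) / (n : ℚ)

/-- The formal binomial series `(1+y)^x = Σ_n C(x,n) y^n`. -/
noncomputable def binomSeries (x : ℚ) : PowerSeries ℚ :=
  PowerSeries.mk fun n => myChoose x n

/-- `A_{k,x}(y) = (1/k!) (1+y)^x log^k(1+y)`. -/
noncomputable def Aser (k : ℕ) (x : ℚ) : PowerSeries ℚ :=
  ((k.factorial : ℚ)⁻¹) • (binomSeries x * log1p ^ k)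

/-- Formal derivative in `y`. -/
noncomputable def Dy (f : PowerSeries ℚ) : PowerSeries ℚ :=
  PowerSeries.mk fun n => ((n + 1 : ℕ) : ℚ) * PowerSeries.coeff (R := ℚ) (n + 1) f

section StmtOneProof
open PowerSeries




lemma stirling1_lt : ∀ n k, n < k → stirling1 n k = 0 := by
  intro n
  induction n with
  | zero => intro k hk; cases k with
    | zero => omega
    | succ k => rfl
  | succ n ih =>
    intro k hk
    cases k with
    | zero => omega
    | succ k =>
      show n * stirling1 n (k+1) + stirling1 n k = 0
      rw [ih (k+1) (by omega), ih k (by omega)]; ring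

lemma stirling1_succ_zero : ∀ n, stirling1 (n+1) 0 = 0 := by
  intro n
  induction n with
  | zero => rfl
  | succ n ih => show (n+1) * stirling1 (n+1) 0 = 0; rw [ih]; ring

open scoped PowerSeries in
lemma one_add_X_mul_dlog : (1 + X) * (d⁄dX ℚ) log1p = 1 := by
  ext n
  rw [add_mul, one_mul, map_add]
  cases n with
  | zero =>
    simp [PowerSeries.coeff_derivative, log1p, PowerSeries.coeff_mk]
  | succ n =>
    rw [PowerSeries.coeff_succ_X_mul, PowerSeries.coeff_derivative,
      PowerSeries.coeff_derivative]
    simp only [log1p, PowerSeries.coeff_mk]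
    have h1 : (n:ℚ) + 1 ≠ 0 := by positivity
    have h2 : (n:ℚ) + 1 + 1 ≠ 0 := by positivity
    simp only [Nat.succ_ne_zero, if_neg, Nat.cast_add, Nat.cast_one, PowerSeries.coeff_one]
    simp only [if_false]
    field_simp
    ring

open scoped PowerSeries in
lemma coeff_X_mul_deriv (g : PowerSeries ℚ) (n : ℕ) :
    PowerSeries.coeff n (X * (d⁄dX ℚ) g) = n * PowerSeries.coeff n g := by
  cases n with
  | zero => simp
  | succ n =>
    rw [PowerSeries.coeff_succ_X_mul, PowerSeries.coeff_derivative]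
    push_cast
    ring

open scoped PowerSeries in
lemma keyrec (k n : ℕ) :
    ((n : ℚ) + 1) * PowerSeries.coeff (n + 1) (log1p ^ (k + 1)) +
      (n : ℚ) * PowerSeries.coeff n (log1p ^ (k + 1)) =
      ((k : ℚ) + 1) * PowerSeries.coeff n (log1p ^ k) := by
  have hD : (d⁄dX ℚ) (log1p ^ (k + 1)) =
      ((k + 1 : ℕ) : PowerSeries ℚ) * (log1p ^ k * (d⁄dX ℚ) log1p) := by
    rw [Derivation.leibniz_pow]
    simp only [Nat.add_sub_cancel, smul_eq_mul, nsmul_eq_mul]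
  have h : (1 + X) * (d⁄dX ℚ) (log1p ^ (k + 1)) =
      PowerSeries.C ((k : ℚ) + 1) * log1p ^ k := by
    rw [hD]
    have : (1 + X) * (((k + 1 : ℕ) : PowerSeries ℚ) * (log1p ^ k * (d⁄dX ℚ) log1p)) =
        ((k + 1 : ℕ) : PowerSeries ℚ) * (log1p ^ k * ((1 + X) * (d⁄dX ℚ) log1p)) := by ring
    rw [this, one_add_X_mul_dlog, mul_one, ← map_natCast (PowerSeries.C (R := ℚ)) (k + 1)]
    push_cast
    ring
  have hc := congrArg (PowerSeries.coeff n) h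
  rw [add_mul, one_mul, map_add, coeff_X_mul_deriv, PowerSeries.coeff_derivative,
    PowerSeries.coeff_C_mul] at hc
  -- (cast already normalized)
  linarith

lemma coeff_log_pow : ∀ k n, PowerSeries.coeff n (log1p ^ k) =
    (-1 : ℚ) ^ (n + k) * (k.factorial : ℚ) * (stirling1 n k : ℚ) / (n.factorial : ℚ) := by
  intro k
  induction k with
  | zero =>
    intro n
    cases n with
    | zero => simp [stirling1]
    | succ n =>
      rw [pow_zero, PowerSeries.coeff_one, if_neg (Nat.succ_ne_zero n),
        stirling1_succ_zero]
      simp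
  | succ k ih =>
    intro n
    induction n with
    | zero =>
      rw [PowerSeries.coeff_zero_eq_constantCoeff, map_pow]
      have h0 : PowerSeries.constantCoeff log1p = 0 := by
        simp [log1p, ← PowerSeries.coeff_zero_eq_constantCoeff]
      rw [h0, zero_pow (Nat.succ_ne_zero k)]
      show (0 : ℚ) = (-1 : ℚ) ^ (0 + (k+1)) * _ * ((stirling1 0 (k+1) : ℕ) : ℚ) / _
      rw [show stirling1 0 (k+1) = 0 from rfl]
      simp
    | succ n ihn =>
      have hr := keyrec k n
      rw [ihn, ih n] at hr
      have hne : ((n : ℚ) + 1) ≠ 0 := by positivity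
      have hfn : ((n.factorial : ℕ) : ℚ) ≠ 0 := by exact_mod_cast n.factorial_ne_zero
      have key : ((n : ℚ) + 1) * ((-1 : ℚ) ^ ((n+1) + (k+1)) * ((k+1).factorial : ℚ) *
            (stirling1 (n+1) (k+1) : ℚ) / ((n+1).factorial : ℚ)) +
          (n : ℚ) * ((-1 : ℚ) ^ (n + (k+1)) * ((k+1).factorial : ℚ) *
            (stirling1 n (k+1) : ℚ) / (n.factorial : ℚ)) =
          ((k : ℚ) + 1) * ((-1 : ℚ) ^ (n + k) * (k.factorial : ℚ) *
            (stirling1 n k : ℚ) / (n.factorial : ℚ)) := by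
        rw [show stirling1 (n+1) (k+1) = n * stirling1 n (k+1) + stirling1 n k from rfl]
        rw [Nat.factorial_succ (n), Nat.factorial_succ k]
        push_cast
        field_simp
        ring
      have := hr.trans key.symm
      have h2 : ((n : ℚ) + 1) * PowerSeries.coeff (n + 1) (log1p ^ (k + 1)) =
          ((n : ℚ) + 1) * ((-1 : ℚ) ^ ((n+1) + (k+1)) * ((k+1).factorial : ℚ) *
            (stirling1 (n+1) (k+1) : ℚ) / ((n+1).factorial : ℚ)) := by linarith
      exact mul_left_cancel₀ hne h2



end StmtOneProof

/-- the generating function `A_{k,x}(y) = Σ_{m≥-1} a_{m,k}(x) y^{m+1}`,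
with `a_{m,k}(x) = Σ_{k₁=k}^{m+1} ((-1)^{k₁-k}/k₁!) [k₁,k] C(x, m+1-k₁)`, equals
`(1/k!) (1+y)^x log^k(1+y)`.  Here the coefficient of `y^N` (with `N = m+1`) is `a_{N-1,k}(x)`. -/
theorem stmt1 (k : ℕ) (x : ℚ) :
    (PowerSeries.mk fun N => ∑ k₁ ∈ Finset.Icc k N,
        ((-1 : ℚ) ^ (k₁ - k) / (k₁.factorial : ℚ)) * (stirling1 k₁ k : ℚ) *
          myChoose x (N - k₁)) =
      ((k.factorial : ℚ)⁻¹) • (binomSeries x * log1p ^ k) := by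

  ext N
  rw [PowerSeries.coeff_mk, map_smul, PowerSeries.coeff_mul, smul_eq_mul]
  have hfk : ((k.factorial : ℕ) : ℚ) ≠ 0 := by exact_mod_cast k.factorial_ne_zero
  rw [Finset.Nat.sum_antidiagonal_eq_sum_range_succ_mk]
  have hR : ∀ i ∈ Finset.range (N + 1),
      PowerSeries.coeff (i, N - i).1 (binomSeries x) *
        PowerSeries.coeff (i, N - i).2 (log1p ^ k) =
      myChoose x i * ((-1 : ℚ) ^ ((N - i) + k) * (k.factorial : ℚ) *
        (stirling1 (N - i) k : ℚ) / ((N - i).factorial : ℚ)) := by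
    intro i _
    rw [binomSeries, PowerSeries.coeff_mk, coeff_log_pow]
  rw [Finset.sum_congr rfl hR]
  rw [← Finset.sum_range_reflect
    (fun i => myChoose x i * ((-1 : ℚ) ^ ((N - i) + k) * (k.factorial : ℚ) *
        (stirling1 (N - i) k : ℚ) / ((N - i).factorial : ℚ))) (N + 1)]
  -- Now RHS sum index j runs over range (N+1), term at j uses i = N + 1 - 1 - j = N - j
  have hL : (∑ k₁ ∈ Finset.Icc k N,
        ((-1 : ℚ) ^ (k₁ - k) / (k₁.factorial : ℚ)) * (stirling1 k₁ k : ℚ) *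
          myChoose x (N - k₁)) =
      ∑ k₁ ∈ Finset.range (N + 1),
        ((-1 : ℚ) ^ (k₁ + k) / (k₁.factorial : ℚ)) * (stirling1 k₁ k : ℚ) *
          myChoose x (N - k₁) := by
    rw [show Finset.range (N + 1) = Finset.Icc 0 N by
      rw [Finset.range_eq_Ico]; rfl]
    rcases le_or_gt k (N + 1) with hkN | hkN
    · rw [← Finset.sum_subset (Finset.Icc_subset_Icc_left (Nat.zero_le k))]
      · apply Finset.sum_congr rfl
        intro k₁ hk₁
        rw [Finset.mem_Icc] at hk₁
        congr 2
        rw [show k₁ + k = k₁ - k + 2 * k by omega, pow_add, pow_mul]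
        simp
      · intro k₁ hk₁ hk₁'
        rw [Finset.mem_Icc] at hk₁
        rw [Finset.mem_Icc] at hk₁'
        rw [stirling1_lt k₁ k (by omega)]
        simp
    · rw [Finset.Icc_eq_empty (by omega), Finset.sum_empty]
      rw [eq_comm, Finset.sum_eq_zero]
      intro k₁ hk₁
      rw [Finset.mem_Icc] at hk₁
      rw [stirling1_lt k₁ k (by omega)]
      simp
  rw [hL, Finset.mul_sum]
  apply Finset.sum_congr rfl
  intro k₁ hk₁
  rw [Finset.mem_range] at hk₁
  have h1 : N + 1 - 1 - k₁ = N - k₁ := by omega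
  have h2 : N - (N - k₁) = k₁ := by omega
  rw [h1, h2]
  have hfk1 : ((k₁.factorial : ℕ) : ℚ) ≠ 0 := by exact_mod_cast k₁.factorial_ne_zero
  field_simp
end

section
/- For every integer k ≥ 0 and indeterminate x, the formal power series identity holds: A_{2k,x}(y) - A_{2k,x-1}(y) = 2·Σ_{h≥k+1} C(2h, 2k)·A_{2h,x}(y)/y, where A_{k,x}(y) = (1/k!)(1+y)^x log^k(1+y). Equivalently, both sides equal (y/(2k)!)·(1+y)^{x-1}·log^{2k}(1+y). -/
open Finset

open PowerSeries

section Aux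

lemma X_dvd_log1p : (X : ℚ⟦X⟧) ∣ log1p := by
  rw [PowerSeries.X_dvd_iff]
  simp [log1p, PowerSeries.constantCoeff_mk]

lemma coeff_log1p_pow_zero {j m : ℕ} (h : j < m) :
    PowerSeries.coeff (R := ℚ) j (log1p ^ m) = 0 := by
  have : (X : ℚ⟦X⟧) ^ m ∣ log1p ^ m := pow_dvd_pow_of_dvd X_dvd_log1p m
  exact (PowerSeries.X_pow_dvd_iff.mp this) j h

lemma coeff_pow_mul_zero {j m : ℕ} (h : j < m) (P : ℚ⟦X⟧) :
    PowerSeries.coeff (R := ℚ) j (P * log1p ^ m) = 0 := by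
  have : (X : ℚ⟦X⟧) ^ m ∣ P * log1p ^ m :=
    Dvd.dvd.mul_left (pow_dvd_pow_of_dvd X_dvd_log1p m) P
  exact (PowerSeries.X_pow_dvd_iff.mp this) j h

lemma myChoose_pascal (x : ℚ) (n : ℕ) :
    myChoose x n = myChoose (x - 1) n + (if n = 0 then 0 else myChoose (x - 1) (n - 1)) := by
  cases n with
  | zero => simp [myChoose]
  | succ n =>
    simp only [Nat.succ_ne_zero, if_false, Nat.add_sub_cancel, myChoose]
    rw [Finset.prod_range_succ', Finset.prod_range_succ]
    have hfac : ((n+1).factorial : ℚ) = (n.factorial : ℚ) * (n+1) := by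
      rw [Nat.factorial_succ]; push_cast; ring
    have hne : (n.factorial : ℚ) ≠ 0 := Nat.cast_ne_zero.mpr (Nat.factorial_ne_zero n)
    have hne1 : ((n:ℚ)+1) ≠ 0 := by positivity
    have hprod : ∀ i ∈ Finset.range n, (x - (i+1:ℕ)) = (x - 1 - (i:ℚ)) := by
      intro i _; push_cast; ring
    rw [Finset.prod_congr rfl hprod]
    field_simp [hfac]
    push_cast [Nat.factorial_succ]
    ring

lemma pascal (x : ℚ) : binomSeries x = (1 + X) * binomSeries (x - 1) := by
  ext n
  rw [add_mul, one_mul, map_add]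
  cases n with
  | zero => simp [binomSeries, myChoose_pascal x 0]
  | succ n =>
    rw [PowerSeries.coeff_succ_X_mul]
    simp only [binomSeries, PowerSeries.coeff_mk]
    rw [myChoose_pascal x (n+1)]
    simp

noncomputable def Spart (c : ℚ) (M : ℕ) : ℚ⟦X⟧ :=
  ∑ m ∈ Finset.range (M + 1), (c ^ m * ((m.factorial : ℚ))⁻¹) • log1p ^ m

noncomputable def Eser (c : ℚ) : ℚ⟦X⟧ :=
  PowerSeries.mk fun j => ∑ m ∈ Finset.range (j + 1),
    c ^ m * ((m.factorial : ℚ))⁻¹ * PowerSeries.coeff (R := ℚ) j (log1p ^ m)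

lemma coeff_Eser_eq_Spart {j M : ℕ} (h : j ≤ M) (c : ℚ) :
    PowerSeries.coeff (R := ℚ) j (Eser c) = PowerSeries.coeff (R := ℚ) j (Spart c M) := by
  simp only [Eser, Spart, PowerSeries.coeff_mk, map_sum, PowerSeries.coeff_smul, smul_eq_mul]
  rw [← Finset.sum_subset (Finset.range_subset_range.mpr (by omega : j + 1 ≤ M + 1))]
  intro m hm hnm
  rw [coeff_log1p_pow_zero (by simp at hm hnm ⊢; omega), mul_zero]

lemma d_log1p : (1 + X) * (d⁄dX ℚ log1p) = 1 := by
  ext n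
  rw [add_mul, one_mul, map_add]
  cases n with
  | zero =>
    simp [PowerSeries.coeff_derivative, log1p, PowerSeries.coeff_mk]
  | succ n =>
    rw [PowerSeries.coeff_succ_X_mul]
    simp only [PowerSeries.coeff_derivative, log1p, PowerSeries.coeff_mk]
    have h1 : ((n:ℚ)+1) ≠ 0 := by positivity
    have h2 : ((n:ℚ)+1+1) ≠ 0 := by positivity
    simp only [Nat.succ_ne_zero, if_false, Nat.add_eq, PowerSeries.coeff_one]
    push_cast
    field_simp
    ring

lemma d_Spart (c : ℚ) (M : ℕ) :
    d⁄dX ℚ (Spart c (M + 1)) = c • (Spart c M * d⁄dX ℚ log1p) := by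
  unfold Spart
  rw [map_sum, Finset.sum_range_succ']
  simp only [Derivation.leibniz_pow, Derivation.map_smul, zero_smul, smul_zero, add_zero]
  rw [Finset.sum_mul, Finset.smul_sum]
  apply Finset.sum_congr rfl
  intro m hm
  have h : ((m+1 : ℕ) : ℚ⟦X⟧) = PowerSeries.C (R := ℚ) ((m:ℚ)+1 : ℚ) := by simp [map_add, map_natCast]
  simp only [Nat.add_sub_cancel, Nat.factorial_succ, smul_smul, PowerSeries.smul_eq_C_mul,
    nsmul_eq_mul, h, ← map_mul]
  have hm0 : ((m:ℚ)+1) ≠ 0 := by positivity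
  have hf : ((m.factorial : ℚ)) ≠ 0 := Nat.cast_ne_zero.mpr (Nat.factorial_ne_zero m)
  have key : (c ^ (m + 1) * (((m+1) * m.factorial : ℕ) : ℚ)⁻¹) * ((m:ℚ)+1) =
      c * (c ^ m * ((m.factorial:ℚ))⁻¹) := by push_cast; field_simp; ring
  rw [smul_eq_mul (α := ℚ⟦X⟧), ← mul_assoc, ← mul_assoc, ← map_mul, key, map_mul]
  ring

lemma d_Eser (c : ℚ) : d⁄dX ℚ (Eser c) = c • (Eser c * d⁄dX ℚ log1p) := by
  ext n
  rw [PowerSeries.coeff_derivative, coeff_Eser_eq_Spart (by omega : n + 1 ≤ n + 1) c,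
    ← PowerSeries.coeff_derivative, d_Spart]
  rw [PowerSeries.coeff_smul, PowerSeries.coeff_smul, smul_eq_mul, smul_eq_mul]
  congr 1
  rw [PowerSeries.coeff_mul, PowerSeries.coeff_mul]
  apply Finset.sum_congr rfl
  intro p hp
  rw [Finset.HasAntidiagonal.mem_antidiagonal] at hp
  rw [coeff_Eser_eq_Spart (by omega : p.1 ≤ n) c]

lemma ode_Eser (c : ℚ) : (1 + X) * d⁄dX ℚ (Eser c) = c • Eser c := by
  rw [d_Eser, mul_smul_comm]
  congr 1
  calc (1 + X) * (Eser c * d⁄dX ℚ log1p) = ((1 + X) * d⁄dX ℚ log1p) * Eser c := by ring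
    _ = Eser c := by rw [d_log1p, one_mul]

lemma ode_unique (c : ℚ) (f g : ℚ⟦X⟧)
    (hf : (1 + X) * d⁄dX ℚ f = c • f) (hg : (1 + X) * d⁄dX ℚ g = c • g)
    (h0 : PowerSeries.coeff (R := ℚ) 0 f = PowerSeries.coeff (R := ℚ) 0 g) : f = g := by
  ext n
  induction n with
  | zero => exact h0
  | succ n ih =>
    have Hf := congrArg (PowerSeries.coeff (R := ℚ) n) hf
    have Hg := congrArg (PowerSeries.coeff (R := ℚ) n) hg
    rw [add_mul, one_mul, map_add] at Hf Hg
    have hn1 : ((n:ℚ)+1) ≠ 0 := by positivity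
    cases n with
    | zero =>
      rw [PowerSeries.coeff_zero_X_mul, add_zero, PowerSeries.coeff_derivative,
        PowerSeries.coeff_smul, smul_eq_mul] at Hf Hg
      rw [h0] at Hf
      have h2 : ((0:ℚ)+1) ≠ 0 := by norm_num
      exact mul_right_cancel₀ h2 (Hf.trans Hg.symm)
    | succ n =>
      rw [PowerSeries.coeff_succ_X_mul, PowerSeries.coeff_derivative,
        PowerSeries.coeff_derivative, PowerSeries.coeff_smul, smul_eq_mul] at Hf Hg
      rw [ih] at Hf
      have h2 : ((n:ℚ)+1+1) ≠ 0 := by positivity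
      have h3 := add_right_cancel (Hf.trans Hg.symm)
      push_cast at h3
      exact mul_right_cancel₀ h2 h3

lemma Eser_one : Eser 1 = 1 + X := by
  apply ode_unique 1
  · exact ode_Eser 1
  · rw [map_add, Derivation.map_one_eq_zero, PowerSeries.derivative_X, zero_add, mul_one, one_smul]
  · simp [Eser, PowerSeries.coeff_mk, PowerSeries.coeff_zero_eq_constantCoeff, map_add]

noncomputable def invS : ℚ⟦X⟧ := PowerSeries.mk fun n => (-1 : ℚ) ^ n

lemma one_add_X_mul_invS : (1 + X) * invS = 1 := by
  ext n
  rw [add_mul, one_mul, map_add]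
  cases n with
  | zero => simp [invS]
  | succ n => rw [PowerSeries.coeff_succ_X_mul]; simp [invS, pow_succ]

lemma Eser_neg_one : Eser (-1) = invS := by
  apply ode_unique (-1)
  · exact ode_Eser (-1)
  · ext n
    rw [add_mul, one_mul, map_add]
    cases n with
    | zero => simp [invS, PowerSeries.coeff_derivative]
    | succ n =>
      rw [PowerSeries.coeff_succ_X_mul, PowerSeries.coeff_derivative,
        PowerSeries.coeff_derivative, PowerSeries.coeff_smul]
      simp only [invS, PowerSeries.coeff_mk, smul_eq_mul]
      push_cast
      ring
  · simp [Eser, invS, PowerSeries.coeff_mk]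

lemma sum_range_two_mul (f : ℕ → ℚ) (N : ℕ) :
    ∑ m ∈ Finset.range (2 * N), f m = ∑ i ∈ Finset.range N, (f (2 * i) + f (2 * i + 1)) := by
  induction N with
  | zero => simp
  | succ N ih =>
    rw [Nat.mul_succ, Finset.sum_range_succ, Finset.sum_range_succ, Finset.sum_range_succ, ih]
    ring

noncomputable def Hser : ℚ⟦X⟧ := PowerSeries.mk fun j =>
  2 * ∑ m ∈ Finset.Icc 1 j, (((2 * m).factorial : ℚ))⁻¹ * PowerSeries.coeff (R := ℚ) j (log1p ^ (2 * m))

lemma Hser_eq : Hser = Eser 1 + Eser (-1) - 2 := by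
  ext j
  rw [map_sub, map_add]
  simp only [Hser, Eser, PowerSeries.coeff_mk, one_pow]
  rw [← Finset.sum_add_distrib]
  have step1 : ∑ m ∈ Finset.range (j + 1),
        (1 * ((m.factorial:ℚ))⁻¹ * PowerSeries.coeff (R := ℚ) j (log1p ^ m) +
         (-1:ℚ) ^ m * ((m.factorial:ℚ))⁻¹ * PowerSeries.coeff (R := ℚ) j (log1p ^ m)) =
      ∑ m ∈ Finset.range (2 * (j + 1)),
        ((1 + (-1:ℚ) ^ m) * ((m.factorial:ℚ))⁻¹ * PowerSeries.coeff (R := ℚ) j (log1p ^ m)) := by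
    rw [Finset.sum_subset (Finset.range_subset_range.mpr (by omega : j + 1 ≤ 2 * (j + 1)))]
    · exact Finset.sum_congr rfl fun m _ => by ring
    · intro m hm hnm
      rw [coeff_log1p_pow_zero (by simp at hm hnm ⊢; omega)]
      ring
  rw [step1, sum_range_two_mul]
  have step2 : ∀ i ∈ Finset.range (j + 1),
      ((1 + (-1:ℚ) ^ (2*i)) * (((2*i).factorial:ℚ))⁻¹ * PowerSeries.coeff (R := ℚ) j (log1p ^ (2*i)) +
       (1 + (-1:ℚ) ^ (2*i+1)) * (((2*i+1).factorial:ℚ))⁻¹ * PowerSeries.coeff (R := ℚ) j (log1p ^ (2*i+1)))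
      = 2 * (((2*i).factorial:ℚ))⁻¹ * PowerSeries.coeff (R := ℚ) j (log1p ^ (2*i)) := by
    intro i _
    rw [pow_succ]
    rw [show ((-1:ℚ)^(2*i)) = 1 from by simp [pow_mul]]
    ring
  rw [Finset.sum_congr rfl step2, Finset.sum_range_succ']
  simp only [Nat.mul_zero, pow_zero, Nat.factorial_zero, Nat.cast_one, inv_one, mul_one]
  have step3 : ∑ i ∈ Finset.range j, 2 * (((2*(i+1)).factorial:ℚ))⁻¹ *
        PowerSeries.coeff (R := ℚ) j (log1p ^ (2*(i+1))) =
      2 * ∑ m ∈ Finset.Icc 1 j, (((2 * m).factorial : ℚ))⁻¹ *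
        PowerSeries.coeff (R := ℚ) j (log1p ^ (2 * m)) := by
    rw [Finset.mul_sum]
    rw [show Finset.Icc 1 j = Finset.Ico 1 (j+1) from rfl, Finset.sum_Ico_eq_sum_range]
    apply Finset.sum_congr (by rw [Nat.add_sub_cancel])
    intro i _
    rw [show 1 + i = i + 1 from by omega]
    ring
  rw [step3]
  rw [show (2 : ℚ⟦X⟧) = PowerSeries.C (R := ℚ) 2 from by rfl, PowerSeries.coeff_C,
    PowerSeries.coeff_one]
  rcases eq_or_ne j 0 with h | h
  · subst h; simp
  · simp [h, coeff_log1p_pow_zero]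

lemma one_add_X_mul_Hser : (1 + X) * Hser = X ^ 2 := by
  rw [Hser_eq, Eser_one, Eser_neg_one]
  linear_combination one_add_X_mul_invS

noncomputable def Hpart (M : ℕ) : ℚ⟦X⟧ :=
  ∑ m ∈ Finset.Icc 1 M, (2 * (((2 * m).factorial : ℚ))⁻¹) • log1p ^ (2 * m)

lemma coeff_Hser_eq_Hpart {j M : ℕ} (h : j ≤ M) :
    PowerSeries.coeff (R := ℚ) j Hser = PowerSeries.coeff (R := ℚ) j (Hpart M) := by
  simp only [Hser, Hpart, PowerSeries.coeff_mk, map_sum, PowerSeries.coeff_smul, smul_eq_mul]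
  rw [Finset.mul_sum]
  rw [← Finset.sum_subset (Finset.Icc_subset_Icc_right h)]
  · exact Finset.sum_congr rfl fun m _ => by ring
  · intro m hm hnm
    have : j < 2 * m := by simp at hm hnm; omega
    rw [coeff_log1p_pow_zero this]
    ring

end Aux

/-- `A_{2k,x} - A_{2k,x-1} = 2 Σ_{h≥k+1} C(2h,2k) A_{2h,x}/y`, and both sides equal
`(y/(2k)!) (1+y)^{x-1} log^{2k}(1+y)`.  The infinite sum is encoded coefficientwise. -/
theorem stmt3 (k : ℕ) (x : ℚ) :
    (Aser (2 * k) x - Aser (2 * k) (x - 1) =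
        (2 : ℚ) • (PowerSeries.mk fun n =>
          ∑ h ∈ Finset.Icc (k + 1) (n + 1),
            (((2 * h).choose (2 * k) : ℚ)) * PowerSeries.coeff (R := ℚ) (n + 1) (Aser (2 * h) x))) ∧
      Aser (2 * k) x - Aser (2 * k) (x - 1) =
        (((2 * k).factorial : ℚ)⁻¹) •
          (PowerSeries.X * (binomSeries (x - 1) * log1p ^ (2 * k))) := by
  have part2 : Aser (2 * k) x - Aser (2 * k) (x - 1) =
      (((2 * k).factorial : ℚ)⁻¹) • (X * (binomSeries (x - 1) * log1p ^ (2 * k))) := by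
    unfold Aser
    rw [← smul_sub]
    congr 1
    rw [pascal x]
    ring
  refine ⟨?_, part2⟩
  rw [part2]
  ext n
  rw [PowerSeries.coeff_smul, PowerSeries.coeff_smul, PowerSeries.coeff_mk,
    smul_eq_mul, smul_eq_mul]
  -- rewrite each summand
  have e1 : ∀ h ∈ Finset.Icc (k+1) (n+1),
      (((2 * h).choose (2 * k) : ℚ)) * PowerSeries.coeff (R := ℚ) (n + 1) (Aser (2 * h) x) =
      (((2*k).factorial : ℚ))⁻¹ * ((((2*(h-k)).factorial : ℚ))⁻¹ *
        PowerSeries.coeff (R := ℚ) (n+1) ((binomSeries x * log1p ^ (2*k)) * log1p ^ (2*(h-k)))) := by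
    intro h hh
    rw [Finset.mem_Icc] at hh
    unfold Aser
    rw [PowerSeries.coeff_smul, smul_eq_mul]
    have hkh : 2*k ≤ 2*h := by omega
    have h2 : 2*h - 2*k = 2*(h-k) := by omega
    have hfac := Nat.choose_mul_factorial_mul_factorial hkh
    rw [h2] at hfac
    have f1 : (((2*k).factorial : ℚ)) ≠ 0 := Nat.cast_ne_zero.mpr (Nat.factorial_ne_zero _)
    have f2 : (((2*(h-k)).factorial : ℚ)) ≠ 0 := Nat.cast_ne_zero.mpr (Nat.factorial_ne_zero _)
    have f3 : (((2*h).factorial : ℚ)) ≠ 0 := Nat.cast_ne_zero.mpr (Nat.factorial_ne_zero _)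
    have hfacQ : (((2 * h).choose (2 * k) : ℚ)) * (((2*k).factorial : ℚ)) *
        (((2*(h-k)).factorial : ℚ)) = (((2*h).factorial : ℚ)) := by
      exact_mod_cast congrArg (Nat.cast : ℕ → ℚ) hfac
    have hpow : binomSeries x * log1p ^ (2*k) * log1p ^ (2*(h-k)) =
        binomSeries x * log1p ^ (2*h) := by
      rw [mul_assoc, ← pow_add]
      congr 2
      omega
    rw [hpow]
    field_simp
    linear_combination (PowerSeries.coeff (R := ℚ) (n+1) (binomSeries x * log1p ^ (2*h))) * hfacQ
  rw [Finset.sum_congr rfl e1, ← Finset.mul_sum]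
  -- reindex h ↦ h - k
  set P := binomSeries x * log1p ^ (2*k) with hP
  have e2 : ∑ h ∈ Finset.Icc (k+1) (n+1),
      ((((2*(h-k)).factorial : ℚ))⁻¹ * PowerSeries.coeff (R := ℚ) (n+1) (P * log1p ^ (2*(h-k)))) =
      ∑ m ∈ Finset.Icc 1 (n+1-k),
      ((((2*m).factorial : ℚ))⁻¹ * PowerSeries.coeff (R := ℚ) (n+1) (P * log1p ^ (2*m))) := by
    rw [show Finset.Icc (k+1) (n+1) = Finset.Ico (k+1) (n+2) from rfl,
      Finset.sum_Ico_eq_sum_range,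
      show Finset.Icc 1 (n+1-k) = Finset.Ico 1 (n+1-k+1) from rfl,
      Finset.sum_Ico_eq_sum_range]
    have hr : n+2-(k+1) = n+1-k+1-1 := by omega
    apply Finset.sum_congr (by rw [hr])
    intro i _
    have hik : k+1+i-k = 1+i := by omega
    rw [hik]
  rw [e2]
  -- extend the sum to Icc 1 (n+1)
  have e3 : ∑ m ∈ Finset.Icc 1 (n+1-k),
      ((((2*m).factorial : ℚ))⁻¹ * PowerSeries.coeff (R := ℚ) (n+1) (P * log1p ^ (2*m))) =
      ∑ m ∈ Finset.Icc 1 (n+1),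
      ((((2*m).factorial : ℚ))⁻¹ * PowerSeries.coeff (R := ℚ) (n+1) (P * log1p ^ (2*m))) := by
    apply Finset.sum_subset (Finset.Icc_subset_Icc_right (by omega))
    intro m hm hnm
    rw [Finset.mem_Icc] at hm hnm
    have hlt : n + 1 < 2*k + 2*m := by omega
    have : P * log1p ^ (2*m) = binomSeries x * log1p ^ (2*k + 2*m) := by
      rw [hP, mul_assoc, ← pow_add]
    rw [this, coeff_pow_mul_zero hlt, mul_zero]
  rw [e3]
  -- identify with coefficient of P * Hser
  have e4 : PowerSeries.coeff (R := ℚ) (n+1) (P * Hser) =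
      ∑ m ∈ Finset.Icc 1 (n+1),
      (2 * (((2*m).factorial : ℚ))⁻¹ * PowerSeries.coeff (R := ℚ) (n+1) (P * log1p ^ (2*m))) := by
    have hH : PowerSeries.coeff (R := ℚ) (n+1) (P * Hser) =
        PowerSeries.coeff (R := ℚ) (n+1) (P * Hpart (n+1)) := by
      rw [PowerSeries.coeff_mul, PowerSeries.coeff_mul]
      apply Finset.sum_congr rfl
      intro p hp
      rw [Finset.HasAntidiagonal.mem_antidiagonal] at hp
      rw [coeff_Hser_eq_Hpart (by omega : p.2 ≤ n+1)]
    rw [hH]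
    unfold Hpart
    rw [Finset.mul_sum, map_sum]
    apply Finset.sum_congr rfl
    intro m _
    rw [mul_smul_comm, PowerSeries.coeff_smul, smul_eq_mul]
  -- compute P * Hser
  have e5 : P * Hser = X * (X * (binomSeries (x-1) * log1p ^ (2*k))) := by
    rw [hP, pascal x]
    calc (1 + X) * binomSeries (x-1) * log1p ^ (2*k) * Hser
        = ((1 + X) * Hser) * (binomSeries (x-1) * log1p ^ (2*k)) := by ring
      _ = X ^ 2 * (binomSeries (x-1) * log1p ^ (2*k)) := by rw [one_add_X_mul_Hser]
      _ = X * (X * (binomSeries (x-1) * log1p ^ (2*k))) := by ring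
  have e6 : PowerSeries.coeff (R := ℚ) n (X * (binomSeries (x-1) * log1p ^ (2*k))) =
      PowerSeries.coeff (R := ℚ) (n+1) (P * Hser) := by
    rw [e5, PowerSeries.coeff_succ_X_mul]
  rw [e6, e4]
  simp only [Finset.mul_sum]
  apply Finset.sum_congr rfl
  intro m _
  ring
end

section
/- For all integers m, n ≥ -1 and indeterminates x, the polynomial identity holds: (C(1/2+x, m+1) + C(-1/2+x, m+1))·(C(1/2+x-m, n+1) + C(-1/2+x-m, n+1)) - (C(1/2+x, n+1) + C(-1/2+x, n+1))·(C(1/2+x-n, m+1) + C(-1/2+x-n, m+1)) = -2·((m-n)·(m+n+1)!/((m+1)!·(n+1)!))·(C(1/2+x, m+n+1) + C(-1/2+x, m+n+1)). -/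
open Finset

lemma pascal_s4 (y : ℚ) (k : ℕ) :
    myChoose y (k+1) = myChoose (y-1) (k+1) + myChoose (y-1) k := by
  have hk : ((k.factorial : ℚ)) ≠ 0 := Nat.cast_ne_zero.mpr k.factorial_ne_zero
  unfold myChoose
  have h1 : ∏ i ∈ Finset.range (k+1), (y - (i:ℚ)) = (∏ i ∈ Finset.range k, (y - 1 - (i:ℚ))) * y := by
    rw [Finset.prod_range_succ']
    congr 1
    · exact Finset.prod_congr rfl fun i _ => by push_cast; ring
    · simp
  rw [h1, Finset.prod_range_succ, Nat.factorial_succ]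
  push_cast
  field_simp
  ring

lemma prodl (y : ℚ) (p q : ℕ) :
    myChoose y p * myChoose (y - (p:ℚ)) q = (((p+q).choose p : ℕ) : ℚ) * myChoose y (p+q) := by
  have hp : ((p.factorial : ℚ)) ≠ 0 := Nat.cast_ne_zero.mpr p.factorial_ne_zero
  have hq : ((q.factorial : ℚ)) ≠ 0 := Nat.cast_ne_zero.mpr q.factorial_ne_zero
  unfold myChoose
  rw [Finset.prod_range_add, Nat.cast_choose ℚ (Nat.le_add_right p q), Nat.add_sub_cancel_left]
  have h2 : ∏ i ∈ Finset.range q, (y - ((p + i : ℕ):ℚ)) = ∏ i ∈ Finset.range q, (y - (p:ℚ) - (i:ℚ)) :=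
    Finset.prod_congr rfl fun i _ => by push_cast; ring
  rw [h2]
  field_simp

-- core lemma: m = a+1, n = b+1
lemma Snat_pos (a b : ℕ) (u : ℚ) :
    (myChoose u (a+2) + myChoose (u-1) (a+2)) *
      (myChoose (u-(a:ℚ)-1) (b+2) + myChoose (u-(a:ℚ)-2) (b+2)) -
    (myChoose u (b+2) + myChoose (u-1) (b+2)) *
      (myChoose (u-(b:ℚ)-1) (a+2) + myChoose (u-(b:ℚ)-2) (a+2)) =
    -2 * ((((a:ℚ)+1) - ((b:ℚ)+1)) * ((a+b+3).factorial : ℚ) /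
        (((a+2).factorial : ℚ) * ((b+2).factorial : ℚ))) *
      (myChoose u (a+b+3) + myChoose (u-1) (a+b+3)) := by
  -- pascal instances
  have h1 : myChoose u (a+2) = myChoose (u-1) (a+2) + myChoose (u-1) (a+1) := pascal_s4 u (a+1)
  have h1' : myChoose u (b+2) = myChoose (u-1) (b+2) + myChoose (u-1) (b+1) := pascal_s4 u (b+1)
  have h2 : myChoose (u-(a:ℚ)-1) (b+2) = myChoose (u-(a:ℚ)-2) (b+2) + myChoose (u-(a:ℚ)-2) (b+1) := by
    have := pascal_s4 (u-(a:ℚ)-1) (b+1)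
    rw [show u-(a:ℚ)-1-1 = u-(a:ℚ)-2 from by ring] at this; exact this
  have h2' : myChoose (u-(b:ℚ)-1) (a+2) = myChoose (u-(b:ℚ)-2) (a+2) + myChoose (u-(b:ℚ)-2) (a+1) := by
    have := pascal_s4 (u-(b:ℚ)-1) (a+1)
    rw [show u-(b:ℚ)-1-1 = u-(b:ℚ)-2 from by ring] at this; exact this
  have h3 : myChoose (u-(a:ℚ)-2) (b+2) = myChoose (u-(a:ℚ)-3) (b+2) + myChoose (u-(a:ℚ)-3) (b+1) := by
    have := pascal_s4 (u-(a:ℚ)-2) (b+1)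
    rw [show u-(a:ℚ)-2-1 = u-(a:ℚ)-3 from by ring] at this; exact this
  have h3' : myChoose (u-(b:ℚ)-2) (a+2) = myChoose (u-(b:ℚ)-3) (a+2) + myChoose (u-(b:ℚ)-3) (a+1) := by
    have := pascal_s4 (u-(b:ℚ)-2) (a+1)
    rw [show u-(b:ℚ)-2-1 = u-(b:ℚ)-3 from by ring] at this; exact this
  have h4 : myChoose (u-(a:ℚ)-2) (b+1) = myChoose (u-(a:ℚ)-3) (b+1) + myChoose (u-(a:ℚ)-3) b := by
    have := pascal_s4 (u-(a:ℚ)-2) b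
    rw [show u-(a:ℚ)-2-1 = u-(a:ℚ)-3 from by ring] at this; exact this
  have h4' : myChoose (u-(b:ℚ)-2) (a+1) = myChoose (u-(b:ℚ)-3) (a+1) + myChoose (u-(b:ℚ)-3) a := by
    have := pascal_s4 (u-(b:ℚ)-2) a
    rw [show u-(b:ℚ)-2-1 = u-(b:ℚ)-3 from by ring] at this; exact this
  have h5 : myChoose u (a+b+3) = myChoose (u-1) (a+b+3) + myChoose (u-1) (a+b+2) := pascal_s4 u (a+b+2)
  -- product instances
  have g1 : myChoose (u-1) (a+2) * myChoose (u-(a:ℚ)-3) (b+2)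
      = (((a+b+4).choose (a+2) : ℕ):ℚ) * myChoose (u-1) (a+b+4) := by
    have := prodl (u-1) (a+2) (b+2)
    rw [show a+2+(b+2) = a+b+4 from by omega] at this
    rw [show u-1-(((a+2:ℕ)):ℚ) = u-(a:ℚ)-3 from by push_cast; ring] at this
    exact this
  have g2 : myChoose (u-1) (a+2) * myChoose (u-(a:ℚ)-3) (b+1)
      = (((a+b+3).choose (a+2) : ℕ):ℚ) * myChoose (u-1) (a+b+3) := by
    have := prodl (u-1) (a+2) (b+1)
    rw [show a+2+(b+1) = a+b+3 from by omega] at this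
    rw [show u-1-(((a+2:ℕ)):ℚ) = u-(a:ℚ)-3 from by push_cast; ring] at this
    exact this
  have g3 : myChoose (u-1) (a+2) * myChoose (u-(a:ℚ)-3) b
      = (((a+b+2).choose (a+2) : ℕ):ℚ) * myChoose (u-1) (a+b+2) := by
    have := prodl (u-1) (a+2) b
    rw [show a+2+b = a+b+2 from by omega] at this
    rw [show u-1-(((a+2:ℕ)):ℚ) = u-(a:ℚ)-3 from by push_cast; ring] at this
    exact this
  have g4 : myChoose (u-1) (a+1) * myChoose (u-(a:ℚ)-2) (b+2)
      = (((a+b+3).choose (a+1) : ℕ):ℚ) * myChoose (u-1) (a+b+3) := by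
    have := prodl (u-1) (a+1) (b+2)
    rw [show a+1+(b+2) = a+b+3 from by omega] at this
    rw [show u-1-(((a+1:ℕ)):ℚ) = u-(a:ℚ)-2 from by push_cast; ring] at this
    exact this
  have g5 : myChoose (u-1) (a+1) * myChoose (u-(a:ℚ)-2) (b+1)
      = (((a+b+2).choose (a+1) : ℕ):ℚ) * myChoose (u-1) (a+b+2) := by
    have := prodl (u-1) (a+1) (b+1)
    rw [show a+1+(b+1) = a+b+2 from by omega] at this
    rw [show u-1-(((a+1:ℕ)):ℚ) = u-(a:ℚ)-2 from by push_cast; ring] at this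
    exact this
  have g1' : myChoose (u-1) (b+2) * myChoose (u-(b:ℚ)-3) (a+2)
      = (((a+b+4).choose (b+2) : ℕ):ℚ) * myChoose (u-1) (a+b+4) := by
    have := prodl (u-1) (b+2) (a+2)
    rw [show b+2+(a+2) = a+b+4 from by omega] at this
    rw [show u-1-(((b+2:ℕ)):ℚ) = u-(b:ℚ)-3 from by push_cast; ring] at this
    exact this
  have g2' : myChoose (u-1) (b+2) * myChoose (u-(b:ℚ)-3) (a+1)
      = (((a+b+3).choose (b+2) : ℕ):ℚ) * myChoose (u-1) (a+b+3) := by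
    have := prodl (u-1) (b+2) (a+1)
    rw [show b+2+(a+1) = a+b+3 from by omega] at this
    rw [show u-1-(((b+2:ℕ)):ℚ) = u-(b:ℚ)-3 from by push_cast; ring] at this
    exact this
  have g3' : myChoose (u-1) (b+2) * myChoose (u-(b:ℚ)-3) a
      = (((a+b+2).choose (b+2) : ℕ):ℚ) * myChoose (u-1) (a+b+2) := by
    have := prodl (u-1) (b+2) a
    rw [show b+2+a = a+b+2 from by omega] at this
    rw [show u-1-(((b+2:ℕ)):ℚ) = u-(b:ℚ)-3 from by push_cast; ring] at this
    exact this
  have g4' : myChoose (u-1) (b+1) * myChoose (u-(b:ℚ)-2) (a+2)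
      = (((a+b+3).choose (b+1) : ℕ):ℚ) * myChoose (u-1) (a+b+3) := by
    have := prodl (u-1) (b+1) (a+2)
    rw [show b+1+(a+2) = a+b+3 from by omega] at this
    rw [show u-1-(((b+1:ℕ)):ℚ) = u-(b:ℚ)-2 from by push_cast; ring] at this
    exact this
  have g5' : myChoose (u-1) (b+1) * myChoose (u-(b:ℚ)-2) (a+1)
      = (((a+b+2).choose (b+1) : ℕ):ℚ) * myChoose (u-1) (a+b+2) := by
    have := prodl (u-1) (b+1) (a+1)
    rw [show b+1+(a+1) = a+b+2 from by omega] at this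
    rw [show u-1-(((b+1:ℕ)):ℚ) = u-(b:ℚ)-2 from by push_cast; ring] at this
    exact this
  -- choose symmetry facts
  have s1 : (((a+b+4).choose (a+2) : ℕ):ℚ) = (((a+b+4).choose (b+2) : ℕ):ℚ) := by
    congr 1
    rw [← Nat.choose_symm (by omega : a+2 ≤ a+b+4)]
    congr 1
    omega
  have s2 : (((a+b+3).choose (a+1) : ℕ):ℚ) = (((a+b+3).choose (b+2) : ℕ):ℚ) := by
    congr 1
    rw [← Nat.choose_symm (by omega : a+1 ≤ a+b+3)]
    congr 1
    omega
  have s3 : (((a+b+3).choose (b+1) : ℕ):ℚ) = (((a+b+3).choose (a+2) : ℕ):ℚ) := by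
    congr 1
    rw [← Nat.choose_symm (by omega : b+1 ≤ a+b+3)]
    congr 1
    omega
  have s4 : (((a+b+2).choose (a+1) : ℕ):ℚ) = (((a+b+2).choose (b+1) : ℕ):ℚ) := by
    congr 1
    rw [← Nat.choose_symm (by omega : a+1 ≤ a+b+2)]
    congr 1
    omega
  -- numeric facts
  have hfa : ((a+1).factorial:ℚ) ≠ 0 := Nat.cast_ne_zero.mpr (Nat.factorial_ne_zero _)
  have hfb : ((b+1).factorial:ℚ) ≠ 0 := Nat.cast_ne_zero.mpr (Nat.factorial_ne_zero _)
  have hfa0 : ((a).factorial:ℚ) ≠ 0 := Nat.cast_ne_zero.mpr (Nat.factorial_ne_zero _)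
  have hfb0 : ((b).factorial:ℚ) ≠ 0 := Nat.cast_ne_zero.mpr (Nat.factorial_ne_zero _)
  have hc : (((a+b+3).choose (a+2) : ℕ):ℚ) - (((a+b+3).choose (b+2) : ℕ):ℚ)
      = ((b:ℚ)-(a:ℚ)) * (((a+b+3).factorial : ℚ) / (((a+2).factorial : ℚ) * ((b+2).factorial : ℚ))) := by
    rw [Nat.cast_choose ℚ (show a+2 ≤ a+b+3 by omega), Nat.cast_choose ℚ (show b+2 ≤ a+b+3 by omega)]
    rw [show a+b+3-(a+2) = b+1 from by omega, show a+b+3-(b+2) = a+1 from by omega]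
    rw [show (a+2).factorial = (a+2)*(a+1).factorial from Nat.factorial_succ (a+1),
        show (b+2).factorial = (b+2)*(b+1).factorial from Nat.factorial_succ (b+1)]
    push_cast
    field_simp
    ring
  have hd : (((a+b+2).choose (a+2) : ℕ):ℚ) - (((a+b+2).choose (b+2) : ℕ):ℚ)
      = ((b:ℚ)-(a:ℚ)) * (((a+b+3).factorial : ℚ) / (((a+2).factorial : ℚ) * ((b+2).factorial : ℚ))) := by
    rw [Nat.cast_choose ℚ (show a+2 ≤ a+b+2 by omega), Nat.cast_choose ℚ (show b+2 ≤ a+b+2 by omega)]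
    rw [show a+b+2-(a+2) = b from by omega, show a+b+2-(b+2) = a from by omega]
    rw [show (a+2).factorial = (a+2)*((a+1)*(a).factorial) from by
          rw [Nat.factorial_succ (a+1), Nat.factorial_succ a],
        show (b+2).factorial = (b+2)*((b+1)*(b).factorial) from by
          rw [Nat.factorial_succ (b+1), Nat.factorial_succ b],
        show (a+b+3).factorial = (a+b+3)*(a+b+2).factorial from Nat.factorial_succ (a+b+2)]
    push_cast
    field_simp
    ring
  -- two bracket expansions
  have e1 : (myChoose u (a+2) + myChoose (u-1) (a+2)) *
      (myChoose (u-(a:ℚ)-1) (b+2) + myChoose (u-(a:ℚ)-2) (b+2)) =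
      4*(((a+b+4).choose (a+2):ℕ):ℚ) * myChoose (u-1) (a+b+4)
      + (6*(((a+b+3).choose (a+2):ℕ):ℚ) + 2*(((a+b+3).choose (a+1):ℕ):ℚ)) * myChoose (u-1) (a+b+3)
      + (2*(((a+b+2).choose (a+2):ℕ):ℚ) + (((a+b+2).choose (a+1):ℕ):ℚ)) * myChoose (u-1) (a+b+2) := by
    linear_combination (myChoose (u-(a:ℚ)-1) (b+2) + myChoose (u-(a:ℚ)-2) (b+2))*h1
      + (2*myChoose (u-1) (a+2) + myChoose (u-1) (a+1))*h2
      + 4*(myChoose (u-1) (a+2))*h3 + 2*(myChoose (u-1) (a+2))*h4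
      + 4*g1 + 6*g2 + 2*g3 + 2*g4 + g5
  have e2 : (myChoose u (b+2) + myChoose (u-1) (b+2)) *
      (myChoose (u-(b:ℚ)-1) (a+2) + myChoose (u-(b:ℚ)-2) (a+2)) =
      4*(((a+b+4).choose (b+2):ℕ):ℚ) * myChoose (u-1) (a+b+4)
      + (6*(((a+b+3).choose (b+2):ℕ):ℚ) + 2*(((a+b+3).choose (b+1):ℕ):ℚ)) * myChoose (u-1) (a+b+3)
      + (2*(((a+b+2).choose (b+2):ℕ):ℚ) + (((a+b+2).choose (b+1):ℕ):ℚ)) * myChoose (u-1) (a+b+2) := by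
    linear_combination (myChoose (u-(b:ℚ)-1) (a+2) + myChoose (u-(b:ℚ)-2) (a+2))*h1'
      + (2*myChoose (u-1) (b+2) + myChoose (u-1) (b+1))*h2'
      + 4*(myChoose (u-1) (b+2))*h3' + 2*(myChoose (u-1) (b+2))*h4'
      + 4*g1' + 6*g2' + 2*g3' + 2*g4' + g5'
  linear_combination e1 - e2
    + (2 * ((((a:ℚ)+1) - ((b:ℚ)+1)) * ((a+b+3).factorial : ℚ) /
        (((a+2).factorial : ℚ) * ((b+2).factorial : ℚ)))) * h5
    + 4*(myChoose (u-1) (a+b+4))*s1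
    + 2*(myChoose (u-1) (a+b+3))*s2
    - 2*(myChoose (u-1) (a+b+3))*s3
    + (myChoose (u-1) (a+b+2))*s4
    + 4*(myChoose (u-1) (a+b+3))*hc
    + 2*(myChoose (u-1) (a+b+2))*hd

lemma myChoose_zero (y : ℚ) : myChoose y 0 = 1 := by simp [myChoose]

lemma myChoose_one (y : ℚ) : myChoose y 1 = y := by
  simp [myChoose, Nat.factorial]

lemma Sn0 (p : ℕ) (u : ℚ) :
    (myChoose u (p+1) + myChoose (u-1) (p+1)) *
      (myChoose (u-(p:ℚ)) 1 + myChoose (u-(p:ℚ)-1) 1) -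
    (myChoose u 1 + myChoose (u-1) 1) * (myChoose u (p+1) + myChoose (u-1) (p+1)) =
    -2 * ((p:ℚ) * ((p+1).factorial:ℚ) / (((p+1).factorial:ℚ) * ((Nat.factorial 1):ℚ))) *
      (myChoose u (p+1) + myChoose (u-1) (p+1)) := by
  have hf : ((p+1).factorial:ℚ) ≠ 0 := Nat.cast_ne_zero.mpr (Nat.factorial_ne_zero _)
  rw [myChoose_one, myChoose_one, myChoose_one, myChoose_one]
  have hco : ((p:ℚ) * ((p+1).factorial:ℚ) / (((p+1).factorial:ℚ) * ((Nat.factorial 1):ℚ))) = (p:ℚ) := by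
    rw [show (Nat.factorial 1 : ℚ) = 1 from by norm_num [Nat.factorial]]
    field_simp
  rw [hco]
  ring

lemma Snat (a b : ℕ) (u : ℚ) :
    (myChoose u (a+1) + myChoose (u-1) (a+1)) *
      (myChoose (u-(a:ℚ)) (b+1) + myChoose (u-(a:ℚ)-1) (b+1)) -
    (myChoose u (b+1) + myChoose (u-1) (b+1)) *
      (myChoose (u-(b:ℚ)) (a+1) + myChoose (u-(b:ℚ)-1) (a+1)) =
    -2 * (((a:ℚ)-(b:ℚ)) * ((a+b+1).factorial:ℚ) /
        (((a+1).factorial:ℚ) * ((b+1).factorial:ℚ))) *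
      (myChoose u (a+b+1) + myChoose (u-1) (a+b+1)) := by
  rcases a with _|p
  · rcases b with _|q
    · norm_num
    · -- a = 0, b = q+1 : antisymmetric image of Sn0 (q+1)
      have h := Sn0 (q+1) u
      simp only [Nat.cast_zero, sub_zero, Nat.zero_add, Nat.add_zero] at *
      linear_combination -h
  · rcases b with _|q
    · -- b = 0
      have h := Sn0 (p+1) u
      simp only [Nat.cast_zero, sub_zero, Nat.zero_add, Nat.add_zero] at *
      linear_combination h
    · -- main case
      have h := Snat_pos p q u
      have e1 : ((p+1:ℕ):ℚ) = (p:ℚ)+1 := by push_cast; ring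
      have e2 : ((q+1:ℕ):ℚ) = (q:ℚ)+1 := by push_cast; ring
      rw [e1, e2, show u-((p:ℚ)+1) = u-(p:ℚ)-1 from by ring,
          show u-(p:ℚ)-1-1 = u-(p:ℚ)-2 from by ring,
          show u-((q:ℚ)+1) = u-(q:ℚ)-1 from by ring,
          show u-(q:ℚ)-1-1 = u-(q:ℚ)-2 from by ring,
          show p+1+(q+1)+1 = p+q+3 from by omega]
      linear_combination h

/-- for `m, n ≥ -1`,
`(C(1/2+x,m+1)+C(-1/2+x,m+1))(C(1/2+x-m,n+1)+C(-1/2+x-m,n+1))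
 - (C(1/2+x,n+1)+C(-1/2+x,n+1))(C(1/2+x-n,m+1)+C(-1/2+x-n,m+1))
 = -2 (m-n)(m+n+1)!/((m+1)!(n+1)!) (C(1/2+x,m+n+1)+C(-1/2+x,m+n+1))`. -/
theorem stmt4 (m n : ℤ) (hm : -1 ≤ m) (hn : -1 ≤ n) (x : ℚ) :
    (myChoose (1 / 2 + x) (m + 1).toNat + myChoose (-(1 / 2) + x) (m + 1).toNat) *
        (myChoose (1 / 2 + x - (m : ℚ)) (n + 1).toNat +
          myChoose (-(1 / 2) + x - (m : ℚ)) (n + 1).toNat) -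
      (myChoose (1 / 2 + x) (n + 1).toNat + myChoose (-(1 / 2) + x) (n + 1).toNat) *
        (myChoose (1 / 2 + x - (n : ℚ)) (m + 1).toNat +
          myChoose (-(1 / 2) + x - (n : ℚ)) (m + 1).toNat) =
    -2 * (((m : ℚ) - (n : ℚ)) * ((m + n + 1).toNat.factorial : ℚ) /
        (((m + 1).toNat.factorial : ℚ) * ((n + 1).toNat.factorial : ℚ))) *
      (myChoose (1 / 2 + x) (m + n + 1).toNat + myChoose (-(1 / 2) + x) (m + n + 1).toNat) := by
  obtain ⟨a, rfl⟩ : ∃ a : ℕ, m = (a:ℤ) - 1 := ⟨(m+1).toNat, by omega⟩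
  obtain ⟨b, rfl⟩ : ∃ b : ℕ, n = (b:ℤ) - 1 := ⟨(n+1).toNat, by omega⟩
  clear hm hn
  rw [show (-(1/2) + x : ℚ) = (1/2 + x) - 1 from by ring]
  simp only [show (a:ℤ)-1+1 = (a:ℤ) from by ring, show (b:ℤ)-1+1 = (b:ℤ) from by ring,
    show (a:ℤ)-1+((b:ℤ)-1)+1 = (a:ℤ)+(b:ℤ)-1 from by ring, Int.toNat_natCast]
  push_cast
  rcases a with _|p
  · rcases b with _|q
    · -- m = n = -1
      norm_num [myChoose_zero]
    · -- m = -1, n = q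
      simp only [myChoose_zero, Nat.cast_zero]
      rw [show (0:ℚ) - 1 = -1 from by norm_num,
          show (1:ℚ)/2 + x - -1 = 1/2 + x + 1 from by ring,
          show (1:ℚ)/2 + x - 1 - -1 = 1/2 + x from by ring,
          show (0:ℤ) + ((q+1:ℕ):ℤ) - 1 = ((q:ℕ):ℤ) from by omega,
          Int.toNat_natCast]
      have hq : ((q+1).factorial:ℚ) ≠ 0 := Nat.cast_ne_zero.mpr (Nat.factorial_ne_zero _)
      have h1 := pascal_s4 (1/2 + x + 1) q
      rw [show (1:ℚ)/2 + x + 1 - 1 = 1/2 + x from by ring] at h1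
      have h2 := pascal_s4 (1/2 + x) q
      have hco : ((0:ℚ) - 1 - (((q+1:ℕ):ℚ) - 1)) * ((q.factorial:ℕ):ℚ) /
          (((Nat.factorial 0 : ℕ):ℚ) * (((q+1).factorial:ℕ):ℚ)) = -1 := by
        rw [show ((Nat.factorial 0 : ℕ):ℚ) = 1 from by norm_num,
            Nat.factorial_succ]
        push_cast
        field_simp
        ring
      linear_combination 2*h1 + 2*h2 + 2*(myChoose (1/2+x) q + myChoose (1/2+x-1) q)*hco
  · rcases b with _|q
    · -- m = p, n = -1
      simp only [myChoose_zero, Nat.cast_zero]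
      rw [show (0:ℚ) - 1 = -1 from by norm_num,
          show (1:ℚ)/2 + x - -1 = 1/2 + x + 1 from by ring,
          show (1:ℚ)/2 + x - 1 - -1 = 1/2 + x from by ring,
          show ((p+1:ℕ):ℤ) + 0 - 1 = ((p:ℕ):ℤ) from by omega,
          Int.toNat_natCast]
      have hp : ((p+1).factorial:ℚ) ≠ 0 := Nat.cast_ne_zero.mpr (Nat.factorial_ne_zero _)
      have h1 := pascal_s4 (1/2 + x + 1) p
      rw [show (1:ℚ)/2 + x + 1 - 1 = 1/2 + x from by ring] at h1
      have h2 := pascal_s4 (1/2 + x) p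
      have hco : ((((p+1:ℕ):ℚ)) - 1 - ((0:ℚ) - 1)) * ((p.factorial:ℕ):ℚ) /
          ((((p+1).factorial:ℕ):ℚ) * ((Nat.factorial 0 : ℕ):ℚ)) = 1 := by
        rw [show ((Nat.factorial 0 : ℕ):ℚ) = 1 from by norm_num,
            Nat.factorial_succ]
        push_cast
        field_simp
        ring
      linear_combination -2*h1 - 2*h2 + 2*(myChoose (1/2+x) p + myChoose (1/2+x-1) p)*hco
    · -- m = p, n = q : Snat p q
      have h := Snat p q (1/2 + x)
      rw [show (((p+1:ℕ)):ℚ) - 1 = (p:ℚ) from by push_cast; ring,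
          show (((q+1:ℕ)):ℚ) - 1 = (q:ℚ) from by push_cast; ring,
          show (((p+1:ℕ)):ℤ) + ((q+1:ℕ):ℤ) - 1 = ((p+q+1:ℕ):ℤ) from by omega,
          Int.toNat_natCast,
          show (1:ℚ)/2 + x - 1 - (p:ℚ) = 1/2 + x - (p:ℚ) - 1 from by ring,
          show (1:ℚ)/2 + x - 1 - (q:ℚ) = 1/2 + x - (q:ℚ) - 1 from by ring]
      exact h
end
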